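/- Let d ∈ ℕ, i ∈ {1,…,d}, let 0 < α̲ ≤ ᾱ < 2 and let φ satisfy the weak scaling condition (WS). Let η ∈ (ᾱ/2, 1], κ₀ ≥ 1, κ₁ > 0, and let κ : ℝ^d × ℝ^d → ℝ be a measurable function with κ₀^{-1} ≤ κ(x,y) ≤ κ₀ for all x, y ∈ ℝ^d and |κ(x, x+h) − κ(x,x)| ≤ κ₁ |h|^η for all x ∈ ℝ^d and all h ∈ ℝ^d with |h| ≤ 1. Let g : ℝ^d → ℝ be twice continuously differentiable with compact support, and for ε > 0 and x ∈ ℝ^d define L^{(i)}_ε g(x) := ∫_{{|t| > ε}} (g(x + t e_i) − g(x)) · κ(x, x + t e_i) / (|t| φ(|t|)) dt, where e_i is the i-th standard basis vector. Then there exists a bounded function L^{(i)} g : ℝ^d → ℝ such that L^{(i)}_ε g converges uniformly on ℝ^d to L^{(i)} g as ε ↓ 0. -/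

import Mathlib

open MeasureTheory Real Filter Topology Set

lemma neg_embedding : MeasurableEmbedding (fun x : ℝ => -x) :=
  (Homeomorph.neg ℝ).isClosedEmbedding.measurableEmbedding

lemma restrict_neg (s : Set ℝ) (hs : MeasurableSet s) :
    (volume : Measure ℝ).restrict s
      = Measure.map (fun x : ℝ => -x) (volume.restrict ((fun x : ℝ => -x) ⁻¹' s)) := by
  rw [← Measure.restrict_map measurable_neg hs, Measure.map_neg_eq_self]

lemma setIntegral_comp_neg (f : ℝ → ℝ) (s : Set ℝ) (hs : MeasurableSet s) :
    ∫ t in s, f t = ∫ t in (fun x : ℝ => -x) ⁻¹' s, f (-t) := by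
  rw [restrict_neg s hs, neg_embedding.integral_map]

lemma integrableOn_comp_neg {f : ℝ → ℝ} {s : Set ℝ} (hs : MeasurableSet s)
    (h : IntegrableOn f s) : IntegrableOn (fun t => f (-t)) ((fun x : ℝ => -x) ⁻¹' s) := by
  rw [IntegrableOn, restrict_neg s hs] at h
  exact neg_embedding.integrable_map_iff.mp h

lemma exists_measurable_ext (φ : ℝ → ℝ) (hmono : ∀ r R : ℝ, 0 < r → r ≤ R → φ r ≤ φ R) :
    ∃ f : ℝ → ℝ, Measurable f ∧ ∀ r : ℝ, 0 < r → f r = φ r := by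
  refine ⟨fun r => if r ≤ 0 then 0 else φ r, ?_, fun r hr => by simp [not_le.2 hr]⟩
  have hmeas : ∀ n : ℕ, Measurable (fun t : ℝ =>
      Set.indicator {t : ℝ | 1/(n+1) < t} (fun t => φ (max t (1/(n+1)))) t) := by
    intro n
    have hpos : (0:ℝ) < 1/(n+1) := by positivity
    have hm : Monotone (fun t : ℝ => φ (max t (1/(n+1)))) := fun a b hab =>
      hmono _ _ (lt_of_lt_of_le hpos (le_max_right _ _)) (max_le_max hab le_rfl)
    exact hm.measurable.indicator (measurableSet_lt measurable_const measurable_id)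
  apply measurable_of_tendsto_metrizable hmeas
  rw [tendsto_pi_nhds]
  intro t
  by_cases ht : t ≤ 0
  · have : ∀ n : ℕ, Set.indicator {t : ℝ | 1/(n+1) < t} (fun t : ℝ => φ (max t (1/(n+1)))) t = 0 := by
      intro n
      apply Set.indicator_of_notMem
      simp only [Set.mem_setOf_eq, not_lt]
      exact le_trans ht (by positivity)
    simp only [this, ht, if_pos]
    exact tendsto_const_nhds
  · push_neg at ht
    simp only [not_le.2 ht, if_neg, not_false_iff]
    obtain ⟨N, hN⟩ := exists_nat_one_div_lt ht
    apply tendsto_atTop_of_eventually_const (i₀ := N)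
    intro n hn
    have h1 : 1/((n:ℝ)+1) < t := lt_of_le_of_lt (by
      apply one_div_le_one_div_of_le <;> [positivity; exact_mod_cast Nat.succ_le_succ hn]) hN
    rw [Set.indicator_of_mem (by exact h1), max_eq_left h1.le]

lemma taylor_bound {E : Type*} [NormedAddCommGroup E] [NormedSpace ℝ E] {g : E → ℝ}
    (hg : Differentiable ℝ g) {K : NNReal} (hK : LipschitzWith K (fderiv ℝ g)) (x h : E) :
    |g (x + h) - g x - fderiv ℝ g x h| ≤ K * ‖h‖ ^ 2 := by
  set D := fderiv ℝ g with hD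
  set u : E → ℝ := fun y => g y - D x (y - x) with hu
  have h1 : ∀ y : E, HasFDerivAt (fun y : E => D x (y - x)) (D x) y := by
    intro y
    have heq : (fun y : E => D x (y - x)) = fun y : E => D x y - D x x := by
      funext z; rw [map_sub]
    rw [heq]
    exact ((D x).hasFDerivAt (x := y)).sub_const (D x x)
  have hdiff : ∀ y, DifferentiableAt ℝ u y := fun y =>
    (hg y).sub (h1 y).differentiableAt
  have hfd : ∀ y, fderiv ℝ u y = D y - D x := by
    intro y
    rw [hu, fderiv_fun_sub (hg y) (h1 y).differentiableAt, (h1 y).fderiv]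
  have key : ‖u (x + h) - u x‖ ≤ (K * ‖h‖) * ‖(x + h) - x‖ := by
    apply Convex.norm_image_sub_le_of_norm_fderiv_le (s := Metric.closedBall x ‖h‖)
      (fun y _ => hdiff y) ?_ (convex_closedBall x ‖h‖) (Metric.mem_closedBall_self (norm_nonneg h))
      (Metric.mem_closedBall.2 (by simp [dist_eq_norm]))
    intro y hy
    rw [hfd y]
    calc ‖D y - D x‖ ≤ K * ‖y - x‖ := by
          simpa [dist_eq_norm] using hK.dist_le_mul y x
      _ ≤ K * ‖h‖ := by
          apply mul_le_mul_of_nonneg_left _ K.coe_nonneg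
          simpa [dist_eq_norm] using Metric.mem_closedBall.1 hy
  have he : u (x + h) - u x = g (x + h) - g x - D x h := by
    simp only [hu, add_sub_cancel_left, sub_self, map_zero, sub_zero]
    ring
  rw [he] at key
  calc |g (x + h) - g x - D x h| ≤ (K * ‖h‖) * ‖(x+h) - x‖ := key
    _ = K * ‖h‖ ^ 2 := by rw [add_sub_cancel_left]; ring

set_option maxHeartbeats 1000000 in
/-- Under (WS) and the conditions (κ-bounds) and (K_η) on `κ`, for any
`g ∈ C²_c(ℝ^d)` the truncated operators
`L^{(i)}_ε g(x) = ∫_{|t|>ε} (g(x+te_i) - g(x)) κ(x, x+te_i)/(|t| φ(|t|)) dt`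
converge uniformly on `ℝ^d`, as `ε ↓ 0`, to a bounded function `L^{(i)} g`. -/
theorem stmt_9 (d : ℕ) (i : Fin d) (α₀ α₁ c C η κ₀ κ₁ : ℝ) (φ : ℝ → ℝ)
    (hα₀ : 0 < α₀) (hαα : α₀ ≤ α₁) (hα₁ : α₁ < 2)
    (hc : 0 < c) (hc1 : c ≤ 1) (hC : 1 ≤ C)
    (hφpos : ∀ r : ℝ, 0 < r → 0 < φ r)
    (hφmono : ∀ r R : ℝ, 0 < r → r ≤ R → φ r ≤ φ R)
    (hWS : ∀ r R : ℝ, 0 < r → r ≤ R →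
      c * (R / r) ^ α₀ ≤ φ R / φ r ∧ φ R / φ r ≤ C * (R / r) ^ α₁)
    (hη₁ : α₁ / 2 < η) (hη₂ : η ≤ 1) (hκ₀ : 1 ≤ κ₀) (hκ₁ : 0 < κ₁)
    (κ : EuclideanSpace ℝ (Fin d) → EuclideanSpace ℝ (Fin d) → ℝ)
    (hκmeas : Measurable (Function.uncurry κ))
    (hκbdd : ∀ x y : EuclideanSpace ℝ (Fin d), κ₀⁻¹ ≤ κ x y ∧ κ x y ≤ κ₀)
    (hκreg : ∀ (x h : EuclideanSpace ℝ (Fin d)), ‖h‖ ≤ 1 →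
      |κ x (x + h) - κ x x| ≤ κ₁ * ‖h‖ ^ η)
    (g : EuclideanSpace ℝ (Fin d) → ℝ)
    (hg : ContDiff ℝ 2 g) (hgsupp : HasCompactSupport g) :
    ∃ L : EuclideanSpace ℝ (Fin d) → ℝ,
      (∃ M : ℝ, ∀ x, |L x| ≤ M) ∧
      TendstoUniformly
        (fun (ε : ℝ) (x : EuclideanSpace ℝ (Fin d)) =>
          ∫ t in {t : ℝ | ε < |t|},
            (g (x + t • EuclideanSpace.single i 1) - g x) *
              κ x (x + t • EuclideanSpace.single i 1) / (|t| * φ |t|))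
        L (𝓝[>] (0 : ℝ)) := by
  classical
  obtain ⟨f, hfmeas, hfeq⟩ := exists_measurable_ext φ hφmono
  set e : EuclideanSpace ℝ (Fin d) := EuclideanSpace.single i 1 with he_def
  have he : ‖e‖ = 1 := by simp [he_def]
  have hte : ∀ t : ℝ, ‖t • e‖ = |t| := by
    intro t; rw [norm_smul, he, mul_one, Real.norm_eq_abs]
  -- constants for g
  obtain ⟨K1, hK1⟩ := hg.lipschitzWith_of_hasCompactSupport hgsupp (by norm_num)
  have hg1 : ContDiff ℝ 1 (fderiv ℝ g) := hg.fderiv_right (by norm_num)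
  obtain ⟨K2, hK2⟩ := hg1.lipschitzWith_of_hasCompactSupport (hgsupp.fderiv (𝕜 := ℝ)) one_ne_zero
  obtain ⟨Mg, hMg⟩ := hgsupp.exists_bound_of_continuous hg.continuous
  have hMg0 : 0 ≤ Mg := le_trans (norm_nonneg _) (hMg 0)
  have hκ₀pos : (0:ℝ) < κ₀ := lt_of_lt_of_le one_pos hκ₀
  have hκpos : ∀ x y, 0 < κ x y := fun x y =>
    lt_of_lt_of_le (inv_pos.2 hκ₀pos) (hκbdd x y).1
  have hκabs : ∀ x y, |κ x y| ≤ κ₀ := fun x y =>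
    abs_le.2 ⟨by linarith [hκpos x y], (hκbdd x y).2⟩
  have hφ1 : 0 < φ 1 := hφpos 1 one_pos
  -- lower bound for small t
  have hlow : ∀ t : ℝ, 0 < t → t ≤ 1 → (φ t)⁻¹ ≤ (C / φ 1) * t ^ (-α₁) := by
    intro t ht ht1
    have h2 := (hWS t 1 ht ht1).2
    have hφt := hφpos t ht
    have hrw : ((1:ℝ) / t) ^ α₁ = t ^ (-α₁) := by
      rw [one_div, Real.inv_rpow ht.le, ← Real.rpow_neg ht.le]
    rw [hrw] at h2
    calc (φ t)⁻¹ = (φ 1 / φ t) / φ 1 := by field_simp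
      _ ≤ (C * t ^ (-α₁)) / φ 1 := by gcongr
      _ = (C / φ 1) * t ^ (-α₁) := by ring
  -- lower bound for large t
  have htail : ∀ t : ℝ, 1 ≤ t → (t * φ t)⁻¹ ≤ (c * φ 1)⁻¹ * t ^ (-1-α₀) := by
    intro t ht
    have ht0 : (0:ℝ) < t := lt_of_lt_of_le one_pos ht
    have h1 := (hWS 1 t one_pos ht).1
    rw [div_one] at h1
    have hφt : c * φ 1 * t ^ α₀ ≤ φ t := by
      have h2 := mul_le_mul_of_nonneg_right h1 hφ1.le
      rw [div_mul_cancel₀ _ (ne_of_gt hφ1)] at h2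
      calc c * φ 1 * t ^ α₀ = c * t ^ α₀ * φ 1 := by ring
        _ ≤ φ t := h2
    have hpos1 : (0:ℝ) < c * φ 1 * t ^ (1 + α₀) := by positivity
    have hmain : c * φ 1 * t ^ (1 + α₀) ≤ t * φ t := by
      calc c * φ 1 * t ^ (1 + α₀) = t * (c * φ 1 * t ^ α₀) := by
            rw [Real.rpow_add ht0, Real.rpow_one]; ring
        _ ≤ t * φ t := by gcongr
    calc (t * φ t)⁻¹ ≤ (c * φ 1 * t ^ (1 + α₀))⁻¹ := by
          apply inv_anti₀ hpos1 hmain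
      _ = (c * φ 1)⁻¹ * t ^ (-1 - α₀) := by
          rw [mul_inv, ← Real.rpow_neg ht0.le]
          ring_nf
  -- the integrand with measurable replacement of φ
  set G : EuclideanSpace ℝ (Fin d) → ℝ → ℝ := fun x t =>
    (g (x + t • e) - g x) * κ x (x + t • e) / (|t| * f |t|) with hG_def
  have hgdiff : Differentiable ℝ g := hg.differentiable (by norm_num)
  have hsub : ∀ x (t : ℝ), |g (x + t • e) - g x| ≤ K1 * |t| := by
    intro x t
    have h0 := hK1.dist_le_mul (x + t • e) x
    rw [Real.dist_eq, dist_eq_norm, add_sub_cancel_left, hte] at h0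
    exact h0
  have hnum : ∀ x (t : ℝ), |(g (x + t • e) - g x) * κ x (x + t • e)| ≤ K1 * |t| * κ₀ := by
    intro x t
    rw [abs_mul]
    exact mul_le_mul (hsub x t) (hκabs _ _) (abs_nonneg _) (by positivity)
  have hGb1 : ∀ x (t : ℝ), 0 < |t| → |G x t| ≤ K1 * κ₀ * (φ |t|)⁻¹ := by
    intro x t ht
    have hφt := hφpos _ ht
    rw [hG_def]; simp only
    rw [hfeq _ ht, abs_div, abs_of_pos (by positivity : (0:ℝ) < |t| * φ |t|),
      div_le_iff₀ (by positivity)]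
    calc |(g (x + t • e) - g x) * κ x (x + t • e)| ≤ K1 * |t| * κ₀ := hnum x t
      _ = K1 * κ₀ * (φ |t|)⁻¹ * (|t| * φ |t|) := by field_simp
  have hGtail : ∀ x (t : ℝ), 1 ≤ |t| →
      |G x t| ≤ (2 * Mg * κ₀) * ((c * φ 1)⁻¹ * |t| ^ (-1 - α₀)) := by
    intro x t ht
    have ht0 : (0:ℝ) < |t| := lt_of_lt_of_le one_pos ht
    have hφt := hφpos _ ht0
    have hnum2 : |(g (x + t • e) - g x) * κ x (x + t • e)| ≤ 2 * Mg * κ₀ := by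
      rw [abs_mul]
      apply mul_le_mul _ (hκabs _ _) (abs_nonneg _) (by positivity)
      calc |g (x + t • e) - g x| ≤ |g (x + t • e)| + |g x| := abs_sub _ _
        _ ≤ Mg + Mg := add_le_add (hMg _) (hMg _)
        _ = 2 * Mg := by ring
    have h5 := htail |t| ht
    rw [hG_def]; simp only
    rw [hfeq _ ht0, abs_div, abs_of_pos (by positivity : (0:ℝ) < |t| * φ |t|),
      div_le_iff₀ (by positivity)]
    calc |(g (x + t • e) - g x) * κ x (x + t • e)| ≤ 2 * Mg * κ₀ := hnum2
      _ = (2 * Mg * κ₀) * ((|t| * φ |t|)⁻¹ * (|t| * φ |t|)) := by field_simp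
      _ ≤ (2 * Mg * κ₀) * (((c * φ 1)⁻¹ * |t| ^ (-1 - α₀)) * (|t| * φ |t|)) := by
          gcongr
      _ = (2 * Mg * κ₀) * ((c * φ 1)⁻¹ * |t| ^ (-1 - α₀)) * (|t| * φ |t|) := by ring
  -- symmetrized bound
  have hGsym : ∀ x (t : ℝ), 0 < t → t ≤ 1 →
      |G x t + G x (-t)| ≤ ((2 * K2 * κ₀ + 2 * K1 * κ₁) * (C / φ 1)) * t ^ (η - α₁) := by
    intro x t ht ht1
    have habs : |t| = t := abs_of_pos ht
    have habs' : |(-t)| = t := by rw [abs_neg, habs]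
    have hφt := hφpos t ht
    have hft : f |t| = φ t := by rw [habs, hfeq t ht]
    have hft' : f |(-t)| = φ t := by rw [habs', hfeq t ht]
    have hGsum : G x t + G x (-t) =
        ((g (x + t • e) + g (x + (-t) • e) - 2 * g x) * κ x (x + t • e)
          + (g (x + (-t) • e) - g x) * (κ x (x + (-t) • e) - κ x (x + t • e))) / (t * φ t) := by
      rw [hG_def]; simp only
      rw [hft, hft', habs, habs', ← add_div]
      congr 1
      ring
    have hDsum : fderiv ℝ g x (t • e) + fderiv ℝ g x ((-t) • e) = 0 := by
      rw [← map_add]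
      rw [show t • e + (-t) • e = 0 by rw [neg_smul, add_neg_cancel], map_zero]
    have hA : |g (x + t • e) + g (x + (-t) • e) - 2 * g x| ≤ 2 * K2 * t ^ 2 := by
      have e1 := taylor_bound hgdiff hK2 x (t • e)
      have e2 := taylor_bound hgdiff hK2 x ((-t) • e)
      rw [hte, habs] at e1
      rw [hte, habs'] at e2
      calc |g (x + t • e) + g (x + (-t) • e) - 2 * g x|
          = |(g (x + t • e) - g x - fderiv ℝ g x (t • e))
              + (g (x + (-t) • e) - g x - fderiv ℝ g x ((-t) • e))| := by
            rw [show (g (x + t • e) - g x - fderiv ℝ g x (t • e))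
                + (g (x + (-t) • e) - g x - fderiv ℝ g x ((-t) • e))
                = g (x + t • e) + g (x + (-t) • e) - 2 * g x
                  - (fderiv ℝ g x (t • e) + fderiv ℝ g x ((-t) • e)) from by ring,
              hDsum, sub_zero]
        _ ≤ |g (x + t • e) - g x - fderiv ℝ g x (t • e)|
              + |g (x + (-t) • e) - g x - fderiv ℝ g x ((-t) • e)| := abs_add_le _ _
        _ ≤ K2 * t ^ 2 + K2 * t ^ 2 := add_le_add e1 e2
        _ = 2 * K2 * t ^ 2 := by ring
    have hB : |g (x + (-t) • e) - g x| ≤ K1 * t := by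
      have := hsub x (-t)
      rwa [habs'] at this
    have hκdiff : |κ x (x + (-t) • e) - κ x (x + t • e)| ≤ 2 * κ₁ * t ^ η := by
      have r1 := hκreg x (t • e) (by rw [hte, habs]; exact ht1)
      have r2 := hκreg x ((-t) • e) (by rw [hte, habs']; exact ht1)
      rw [hte, habs] at r1
      rw [hte, habs'] at r2
      calc |κ x (x + (-t) • e) - κ x (x + t • e)|
          = |(κ x (x + (-t) • e) - κ x x) - (κ x (x + t • e) - κ x x)| := by ring_nf
        _ ≤ |κ x (x + (-t) • e) - κ x x| + |κ x (x + t • e) - κ x x| := abs_sub _ _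
        _ ≤ κ₁ * t ^ η + κ₁ * t ^ η := add_le_add r2 r1
        _ = 2 * κ₁ * t ^ η := by ring
    have hte' : t * t ^ η = t ^ (1 + η) := by
      rw [Real.rpow_add ht, Real.rpow_one]
    have hp2 : t ^ (2:ℕ) ≤ t ^ (1 + η) := by
      rw [← Real.rpow_natCast t 2]
      exact Real.rpow_le_rpow_of_exponent_ge ht ht1 (by push_cast; linarith)
    have hN : |(g (x + t • e) + g (x + (-t) • e) - 2 * g x) * κ x (x + t • e)
          + (g (x + (-t) • e) - g x) * (κ x (x + (-t) • e) - κ x (x + t • e))|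
        ≤ (2 * K2 * κ₀ + 2 * K1 * κ₁) * t ^ (1 + η) := by
      calc |(g (x + t • e) + g (x + (-t) • e) - 2 * g x) * κ x (x + t • e)
            + (g (x + (-t) • e) - g x) * (κ x (x + (-t) • e) - κ x (x + t • e))|
          ≤ |(g (x + t • e) + g (x + (-t) • e) - 2 * g x) * κ x (x + t • e)|
            + |(g (x + (-t) • e) - g x) * (κ x (x + (-t) • e) - κ x (x + t • e))| := abs_add_le _ _
        _ = |g (x + t • e) + g (x + (-t) • e) - 2 * g x| * |κ x (x + t • e)|
            + |g (x + (-t) • e) - g x| * |κ x (x + (-t) • e) - κ x (x + t • e)| := by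
            rw [abs_mul, abs_mul]
        _ ≤ (2 * K2 * t ^ 2) * κ₀ + (K1 * t) * (2 * κ₁ * t ^ η) := by
            apply add_le_add
            · exact mul_le_mul hA (hκabs _ _) (abs_nonneg _) (by positivity)
            · exact mul_le_mul hB hκdiff (abs_nonneg _) (by positivity)
        _ = 2 * K2 * κ₀ * t ^ (2:ℕ) + 2 * K1 * κ₁ * (t * t ^ η) := by ring
        _ ≤ 2 * K2 * κ₀ * t ^ (1 + η) + 2 * K1 * κ₁ * t ^ (1 + η) := by
            rw [hte']
            gcongr
        _ = (2 * K2 * κ₀ + 2 * K1 * κ₁) * t ^ (1 + η) := by ring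
    have hkey : t ^ (1 + η) ≤ (C / φ 1) * t ^ (η - α₁) * (t * φ t) := by
      have h6 := hlow t ht ht1
      have h7 : 1 ≤ (C / φ 1) * t ^ (-α₁) * φ t := by
        have h8 := mul_le_mul_of_nonneg_right h6 hφt.le
        rwa [inv_mul_cancel₀ (ne_of_gt hφt)] at h8
      have h9 : t ^ (1 + η) * t ^ (-α₁) = t ^ (η - α₁) * t := by
        rw [← Real.rpow_add ht, ← Real.rpow_add_one (ne_of_gt ht)]
        congr 1
        ring
      calc t ^ (1 + η) = t ^ (1 + η) * 1 := (mul_one _).symm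
        _ ≤ t ^ (1 + η) * ((C / φ 1) * t ^ (-α₁) * φ t) := by
            apply mul_le_mul_of_nonneg_left h7 (Real.rpow_nonneg ht.le _)
        _ = (C / φ 1) * (t ^ (1 + η) * t ^ (-α₁)) * φ t := by ring
        _ = (C / φ 1) * (t ^ (η - α₁) * t) * φ t := by rw [h9]
        _ = (C / φ 1) * t ^ (η - α₁) * (t * φ t) := by ring
    rw [hGsum, abs_div, abs_of_pos (by positivity : (0:ℝ) < t * φ t),
      div_le_iff₀ (by positivity)]
    calc |(g (x + t • e) + g (x + (-t) • e) - 2 * g x) * κ x (x + t • e)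
          + (g (x + (-t) • e) - g x) * (κ x (x + (-t) • e) - κ x (x + t • e))|
        ≤ (2 * K2 * κ₀ + 2 * K1 * κ₁) * t ^ (1 + η) := hN
      _ ≤ (2 * K2 * κ₀ + 2 * K1 * κ₁) * ((C / φ 1) * t ^ (η - α₁) * (t * φ t)) := by
          apply mul_le_mul_of_nonneg_left hkey (by positivity)
      _ = (2 * K2 * κ₀ + 2 * K1 * κ₁) * (C / φ 1) * t ^ (η - α₁) * (t * φ t) := by ring
  -- measurability
  have hGmeas : ∀ x, Measurable (G x) := by
    intro x
    apply Measurable.div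
    · apply Measurable.mul
      · exact ((hg.continuous.comp (continuous_const.add
          (continuous_id.smul continuous_const))).sub continuous_const).measurable
      · exact hκmeas.comp (continuous_const.prodMk (continuous_const.add
          (continuous_id.smul continuous_const))).measurable
    · exact measurable_abs.mul (hfmeas.comp measurable_abs)
  have hmeas_tail : MeasurableSet {t : ℝ | 1 < |t|} :=
    measurableSet_lt measurable_const measurable_abs
  have htailset : {t : ℝ | 1 < |t|} = Iio (-1) ∪ Ioi 1 := by
    ext t
    simp only [mem_setOf_eq, mem_union, mem_Iio, mem_Ioi, lt_abs]
    constructor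
    · rintro (h | h)
      · right; exact h
      · left; linarith
    · rintro (h | h)
      · right; linarith
      · left; exact h
  -- tail dominating function
  have hWIoi : IntegrableOn (fun t : ℝ => (2*Mg*κ₀) * ((c*φ 1)⁻¹ * |t| ^ (-1-α₀)))
      (Ioi (1:ℝ)) := by
    have base := integrableOn_Ioi_rpow_of_lt (show (-1-α₀) < -1 by linarith) one_pos
    have base2 : IntegrableOn (fun t : ℝ => ((2*Mg*κ₀) * (c*φ 1)⁻¹) * t ^ (-1-α₀))
        (Ioi (1:ℝ)) := base.const_mul ((2*Mg*κ₀) * (c*φ 1)⁻¹)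
    apply IntegrableOn.congr_fun base2 _ measurableSet_Ioi
    intro t ht
    simp only
    rw [abs_of_pos (lt_trans one_pos ht)]
    ring
  have hW : IntegrableOn (fun t : ℝ => (2*Mg*κ₀) * ((c*φ 1)⁻¹ * |t| ^ (-1-α₀)))
      {t : ℝ | 1 < |t|} := by
    rw [htailset]
    apply IntegrableOn.union _ hWIoi
    have h2 := integrableOn_comp_neg measurableSet_Ioi hWIoi
    have hpre : (fun x : ℝ => -x) ⁻¹' (Ioi 1) = Iio (-1) := by
      ext t
      simp only [mem_preimage, mem_Ioi, mem_Iio]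
      constructor <;> intro <;> linarith
    rw [hpre] at h2
    apply IntegrableOn.congr_fun h2 _ measurableSet_Iio
    intro t _
    simp [abs_neg]
  have hItailG : ∀ x, IntegrableOn (G x) {t : ℝ | 1 < |t|} := by
    intro x
    apply Integrable.mono' hW ((hGmeas x).aestronglyMeasurable)
    rw [ae_restrict_iff' hmeas_tail]
    exact ae_of_all _ fun t ht => by
      rw [Real.norm_eq_abs]; exact hGtail x t (le_of_lt ht)
  -- symmetric dominating function
  have hexp1 : (-1:ℝ) < η - α₁ := by linarith
  have hsint : IntegrableOn
      (fun t : ℝ => ((2*K2*κ₀ + 2*K1*κ₁) * (C / φ 1)) * t ^ (η - α₁)) (Ioc (0:ℝ) 1) := by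
    have h0 := intervalIntegral.intervalIntegrable_rpow' (a := (0:ℝ)) (b := 1) hexp1
    rw [intervalIntegrable_iff, uIoc_of_le zero_le_one] at h0
    exact h0.const_mul _
  have hIsym : ∀ x, IntegrableOn (fun t => G x t + G x (-t)) (Ioc (0:ℝ) 1) := by
    intro x
    apply Integrable.mono' hsint
      (((hGmeas x).add ((hGmeas x).comp measurable_neg)).aestronglyMeasurable)
    rw [ae_restrict_iff' measurableSet_Ioc]
    exact ae_of_all _ fun t ht => by
      rw [Real.norm_eq_abs]; exact hGsym x t ht.1 ht.2
  -- annulus integrability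
  have hIann1 : ∀ x, ∀ ε : ℝ, 0 < ε → IntegrableOn (G x) (Ioc ε 1) := by
    intro x ε hε
    apply Measure.integrableOn_of_bounded (M := K1*κ₀*(φ ε)⁻¹) measure_Ioc_lt_top.ne
      ((hGmeas x).aestronglyMeasurable)
    rw [ae_restrict_iff' measurableSet_Ioc]
    apply ae_of_all
    intro t ht
    rw [Real.norm_eq_abs]
    have h1 : 0 < |t| := by rw [abs_of_pos (lt_trans hε ht.1)]; exact lt_trans hε ht.1
    have h2 : ε ≤ |t| := by rw [abs_of_pos (lt_trans hε ht.1)]; exact ht.1.le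
    calc |G x t| ≤ K1*κ₀*(φ |t|)⁻¹ := hGb1 x t h1
      _ ≤ K1*κ₀*(φ ε)⁻¹ := by
          apply mul_le_mul_of_nonneg_left _ (by positivity)
          exact inv_anti₀ (hφpos ε hε) (hφmono ε |t| hε h2)
  have hIann2 : ∀ x, ∀ ε : ℝ, 0 < ε → IntegrableOn (G x) (Ico (-1) (-ε)) := by
    intro x ε hε
    apply Measure.integrableOn_of_bounded (M := K1*κ₀*(φ ε)⁻¹) measure_Ico_lt_top.ne
      ((hGmeas x).aestronglyMeasurable)
    rw [ae_restrict_iff' measurableSet_Ico]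
    apply ae_of_all
    intro t ht
    rw [Real.norm_eq_abs]
    have htneg : t < 0 := lt_of_lt_of_le ht.2 (by linarith)
    have habs : |t| = -t := abs_of_neg htneg
    have h1 : 0 < |t| := by rw [habs]; linarith [ht.2]
    have h2 : ε ≤ |t| := by rw [habs]; linarith [ht.2]
    calc |G x t| ≤ K1*κ₀*(φ |t|)⁻¹ := hGb1 x t h1
      _ ≤ K1*κ₀*(φ ε)⁻¹ := by
          apply mul_le_mul_of_nonneg_left _ (by positivity)
          exact inv_anti₀ (hφpos ε hε) (hφmono ε |t| hε h2)
  -- the limit function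
  set L : EuclideanSpace ℝ (Fin d) → ℝ := fun x =>
    (∫ t in Ioc (0:ℝ) 1, (G x t + G x (-t))) + ∫ t in {t : ℝ | 1 < |t|}, G x t with hL_def
  -- splitting identity
  have hsplit : ∀ x, ∀ ε : ℝ, 0 < ε → ε < 1 →
      ∫ t in {t : ℝ | ε < |t|}, G x t
        = (∫ t in Ioc ε 1, (G x t + G x (-t))) + ∫ t in {t : ℝ | 1 < |t|}, G x t := by
    intro x ε hε hε1
    have hset : {t : ℝ | ε < |t|} = (Ioc ε 1 ∪ Ico (-1) (-ε)) ∪ {t : ℝ | 1 < |t|} := by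
      ext t
      simp only [mem_setOf_eq, mem_union, mem_Ioc, mem_Ico, lt_abs]
      constructor
      · rintro (h | h)
        · rcases le_or_gt t 1 with h1 | h1
          · exact Or.inl (Or.inl ⟨h, h1⟩)
          · exact Or.inr (Or.inl h1)
        · rcases le_or_gt (-1) t with h1 | h1
          · exact Or.inl (Or.inr ⟨h1, by linarith⟩)
          · exact Or.inr (Or.inr (by linarith))
      · rintro ((⟨h1, h2⟩ | ⟨h1, h2⟩) | (h | h))
        · exact Or.inl h1
        · exact Or.inr (by linarith)
        · exact Or.inl (by linarith)
        · exact Or.inr (by linarith)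
    have hdisj1 : Disjoint (Ioc ε 1 ∪ Ico (-1) (-ε)) {t : ℝ | 1 < |t|} := by
      rw [disjoint_left]
      rintro t (ht | ht) hmem
      · rw [mem_setOf_eq, lt_abs] at hmem
        rcases hmem with h | h
        · linarith [ht.2]
        · linarith [ht.1]
      · rw [mem_setOf_eq, lt_abs] at hmem
        rcases hmem with h | h
        · linarith [ht.2]
        · linarith [ht.1]
    have hdisj2 : Disjoint (Ioc ε 1) (Ico (-1) (-ε)) := by
      rw [disjoint_left]
      rintro t ht hmem
      have := ht.1
      have := hmem.2
      linarith
    have hm1 : MeasurableSet (Ico (-1:ℝ) (-ε)) := measurableSet_Ico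
    have hpre2 : (fun x : ℝ => -x) ⁻¹' (Ico (-1) (-ε)) = Ioc ε 1 := by
      ext t
      simp only [mem_preimage, mem_Ico, mem_Ioc]
      constructor
      · rintro ⟨h1, h2⟩
        exact ⟨by linarith, by linarith⟩
      · rintro ⟨h1, h2⟩
        exact ⟨by linarith, by linarith⟩
    have hnegint : IntegrableOn (fun t => G x (-t)) (Ioc ε 1) := by
      have := integrableOn_comp_neg hm1 (hIann2 x ε hε)
      rwa [hpre2] at this
    rw [hset, setIntegral_union hdisj1 hmeas_tail
        ((hIann1 x ε hε).union (hIann2 x ε hε)) (hItailG x),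
      setIntegral_union hdisj2 hm1 (hIann1 x ε hε) (hIann2 x ε hε)]
    congr 1
    have hneg : ∫ t in Ico (-1:ℝ) (-ε), G x t = ∫ t in Ioc ε 1, G x (-t) := by
      rw [setIntegral_comp_neg (G x) (Ico (-1) (-ε)) hm1, hpre2]
    rw [hneg, ← integral_add (hIann1 x ε hε) hnegint]
  -- difference identity
  have hdiff : ∀ x, ∀ ε : ℝ, 0 < ε → ε < 1 →
      L x - ∫ t in {t : ℝ | ε < |t|}, G x t = ∫ t in Ioc (0:ℝ) ε, (G x t + G x (-t)) := by
    intro x ε hε hε1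
    rw [hsplit x ε hε hε1, hL_def]
    simp only
    have hu : Ioc (0:ℝ) ε ∪ Ioc ε 1 = Ioc 0 1 := Ioc_union_Ioc_eq_Ioc hε.le hε1.le
    have hdisj : Disjoint (Ioc (0:ℝ) ε) (Ioc ε 1) := by
      rw [disjoint_left]
      rintro t ht hmem
      have := ht.2
      have := hmem.1
      linarith
    rw [← hu, setIntegral_union hdisj measurableSet_Ioc
      ((hIsym x).mono_set (by rw [← hu]; exact subset_union_left))
      ((hIsym x).mono_set (by rw [← hu]; exact subset_union_right))]
    ring
  -- error bound
  have hp : 0 < η - α₁ + 1 := by linarith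
  have herr : ∀ x, ∀ ε : ℝ, 0 < ε → ε ≤ 1 →
      |∫ t in Ioc (0:ℝ) ε, (G x t + G x (-t))|
        ≤ ((2*K2*κ₀ + 2*K1*κ₁) * (C / φ 1)) * (ε ^ (η - α₁ + 1) / (η - α₁ + 1)) := by
    intro x ε hε hε1
    have hbint : IntegrableOn
        (fun t : ℝ => ((2*K2*κ₀ + 2*K1*κ₁) * (C / φ 1)) * t ^ (η - α₁)) (Ioc 0 ε) :=
      hsint.mono_set (Ioc_subset_Ioc_right hε1)
    have hae : ∀ᵐ t ∂(volume.restrict (Ioc (0:ℝ) ε)),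
        ‖G x t + G x (-t)‖ ≤ ((2*K2*κ₀ + 2*K1*κ₁) * (C / φ 1)) * t ^ (η - α₁) := by
      rw [ae_restrict_iff' measurableSet_Ioc]
      exact ae_of_all _ fun t ht => by
        rw [Real.norm_eq_abs]; exact hGsym x t ht.1 (ht.2.trans hε1)
    calc |∫ t in Ioc (0:ℝ) ε, (G x t + G x (-t))|
        ≤ ∫ t in Ioc (0:ℝ) ε, ((2*K2*κ₀ + 2*K1*κ₁) * (C / φ 1)) * t ^ (η - α₁) := by
          rw [← Real.norm_eq_abs]
          exact norm_integral_le_of_norm_le hbint hae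
      _ = ((2*K2*κ₀ + 2*K1*κ₁) * (C / φ 1)) * ∫ t in Ioc (0:ℝ) ε, t ^ (η - α₁) := by
          rw [MeasureTheory.integral_const_mul]
      _ = ((2*K2*κ₀ + 2*K1*κ₁) * (C / φ 1)) * (ε ^ (η - α₁ + 1) / (η - α₁ + 1)) := by
          congr 1
          rw [← intervalIntegral.integral_of_le hε.le,
            integral_rpow (Or.inl hexp1), Real.zero_rpow hp.ne']
          ring
  -- bound for L
  refine ⟨L, ⟨((2*K2*κ₀ + 2*K1*κ₁) * (C / φ 1)) * ((1:ℝ) ^ (η - α₁ + 1) / (η - α₁ + 1))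
      + ∫ t in {t : ℝ | 1 < |t|}, (2*Mg*κ₀) * ((c*φ 1)⁻¹ * |t| ^ (-1-α₀)), fun x => ?_⟩, ?_⟩
  · rw [hL_def]
    simp only
    apply (abs_add_le _ _).trans
    apply add_le_add (herr x 1 one_pos le_rfl)
    rw [← Real.norm_eq_abs]
    apply norm_integral_le_of_norm_le hW
    rw [ae_restrict_iff' hmeas_tail]
    exact ae_of_all _ fun t ht => by
      rw [Real.norm_eq_abs]; exact hGtail x t ht.le
  · rw [Metric.tendstoUniformly_iff]
    intro δ hδ
    have htend : Tendsto
        (fun ε : ℝ => ((2*K2*κ₀ + 2*K1*κ₁) * (C / φ 1)) * (ε ^ (η - α₁ + 1) / (η - α₁ + 1)))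
        (𝓝[>] (0:ℝ)) (𝓝 0) := by
      have h0 : Tendsto (fun ε : ℝ => ε ^ (η - α₁ + 1)) (𝓝[>] (0:ℝ)) (𝓝 0) := by
        have hcont : ContinuousAt (fun ε : ℝ => ε ^ (η - α₁ + 1)) 0 :=
          Real.continuousAt_rpow_const 0 _ (Or.inr hp.le)
        have h1 := hcont.tendsto
        rw [Real.zero_rpow hp.ne'] at h1
        exact h1.mono_left nhdsWithin_le_nhds
      have := (h0.div_const (η - α₁ + 1)).const_mul ((2*K2*κ₀ + 2*K1*κ₁) * (C / φ 1))
      simpa using this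
    have hev1 : ∀ᶠ ε in 𝓝[>] (0:ℝ),
        ((2*K2*κ₀ + 2*K1*κ₁) * (C / φ 1)) * (ε ^ (η - α₁ + 1) / (η - α₁ + 1)) < δ :=
      htend (Iio_mem_nhds hδ)
    have hev2 : ∀ᶠ ε in 𝓝[>] (0:ℝ), ε ∈ Ioo (0:ℝ) 1 :=
      Ioo_mem_nhdsGT_of_mem ⟨le_refl (0:ℝ), one_pos⟩
    filter_upwards [hev1, hev2] with ε h1 h2
    intro x
    have hεpos := h2.1
    have hε1 := h2.2
    have hFG : ∫ t in {t : ℝ | ε < |t|},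
          (g (x + t • e) - g x) * κ x (x + t • e) / (|t| * φ |t|)
        = ∫ t in {t : ℝ | ε < |t|}, G x t := by
      apply setIntegral_congr_fun (measurableSet_lt measurable_const measurable_abs)
      intro t ht
      have h0 : 0 < |t| := lt_trans hεpos ht
      rw [hG_def]
      simp only [hfeq _ h0]
    rw [Real.dist_eq, hFG, hdiff x ε hεpos hε1]
    exact lt_of_le_of_lt (herr x ε hεpos hε1.le) h1
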